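/- Let G = (V,E) be a locally finite graph, θ a phase and q : V → ℝ a potential of class K_{0⁺}^θ, and assume (G,q) is (a,k)-sparse for some a, k ≥ 0. Then there are ã ∈ (0,1) and k̃ ≥ 0 such that for all finitely supported f : V → ℂ, (1−ã)(Q_deg(f) + Q_q(f)) − k̃·‖f‖² ≤ Q_θ(f) + Q_q(f) ≤ (1+ã)(Q_deg(f) + Q_q(f)) + k̃·‖f‖². -/

import Mathlib

open scoped BigOperators

noncomputable section

variable {V : Type*} [DecidableEq V] (G : SimpleGraph V) [DecidableRel G.Adj]

/-- The squared `ℓ²`-norm `‖f‖² = ∑_x |f x|²` of a (finitely supported) function. -/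
def qNormSq (f : V → ℂ) : ℝ := ∑' x, ‖f x‖ ^ 2

/-- The quadratic form of the Laplacian:
`Q_Δ(f) = (1/2) ∑_{x ~ y} |f x - f y|²` (sum over ordered pairs of adjacent vertices). -/
def qLap (f : V → ℂ) : ℝ :=
  (1 / 2) * ∑' (x : V), ∑' (y : V), if G.Adj x y then ‖f x - f y‖ ^ 2 else 0

/-- The magnetic quadratic form
`Q_θ(f) = (1/2) ∑_{x ~ y} |f x - e^{iθ(x,y)} f y|²`. -/
def qMag (θ : V → V → ℝ) (f : V → ℂ) : ℝ :=
  (1 / 2) * ∑' (x : V), ∑' (y : V),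
    if G.Adj x y then ‖f x - Complex.exp (Complex.I * (θ x y)) * f y‖ ^ 2 else 0

/-- The quadratic form of a potential: `Q_q(f) = ∑_x q x * |f x|²`. -/
def qPot (q : V → ℝ) (f : V → ℂ) : ℝ := ∑' x, q x * ‖f x‖ ^ 2

variable [G.LocallyFinite]

/-- The quadratic form of the degree: `Q_deg(f) = ∑_x deg x * |f x|²`. -/
def qDeg (f : V → ℂ) : ℝ := ∑' x, (G.degree x : ℝ) * ‖f x‖ ^ 2

/-- Twice the number of undirected edges of the subgraph induced on `W`,
i.e. the number of ordered pairs of adjacent vertices in `W × W`. -/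
def edgesTwice (W : Finset V) : ℕ := ((W ×ˢ W).filter fun p => G.Adj p.1 p.2).card

/-- The cardinality `|∂W|` of the edge boundary of `W`. -/
def bdryCard (W : Finset V) : ℕ :=
  ∑ x ∈ W, ((G.neighborFinset x).filter fun y => y ∉ W).card

/-- `(G, q)` is `(a,k)`-sparse: `2|E_W| ≤ k|W| + a(|∂W| + q₊(W))` for all finite `W`. -/
def IsSparse (q : V → ℝ) (a k : ℝ) : Prop :=
  ∀ W : Finset V,
    (edgesTwice G W : ℝ) ≤ k * W.card + a * ((bdryCard G W : ℝ) + ∑ x ∈ W, max (q x) 0)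

/-- The potential `q` belongs to the class `K_α`:
`Q_{q₋}(f) ≤ α (Q_Δ(f) + Q_{q₊}(f)) + C ‖f‖²` for all finitely supported `f`. -/
def KClass (q : V → ℝ) (α : ℝ) : Prop :=
  ∃ C : ℝ, 0 ≤ C ∧ ∀ f : V → ℂ, (Function.support f).Finite →
    qPot (fun x => max (-q x) 0) f ≤
      α * (qLap G f + qPot (fun x => max (q x) 0) f) + C * qNormSq f

/-- The potential `q` belongs to the magnetic class `K_α^θ`:
`Q_{q₋}(f) ≤ α (Q_θ(f) + Q_{q₊}(f)) + C ‖f‖²` for all finitely supported `f`. -/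
def KClassTheta (θ : V → V → ℝ) (q : V → ℝ) (α : ℝ) : Prop :=
  ∃ C : ℝ, 0 ≤ C ∧ ∀ f : V → ℂ, (Function.support f).Finite →
    qPot (fun x => max (-q x) 0) f ≤
      α * (qMag G θ f + qPot (fun x => max (q x) 0) f) + C * qNormSq f

/-- The Cheeger (isoperimetric) constant of `U ⊆ V`:
the infimum over nonempty finite `W ⊆ U` of `(|∂W| + q(W)) / (deg(W) + q(W))`,
with the convention that the quotient is `0` when the denominator vanishes. -/
def cheeger (q : V → ℝ) (U : Set V) : ℝ :=
  ⨅ W : {W : Finset V // ↑W ⊆ U ∧ W.Nonempty},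
    if (∑ x ∈ W.1, ((G.degree x : ℝ) + q x)) = 0 then 0
    else ((bdryCard G W.1 : ℝ) + ∑ x ∈ W.1, q x) / ∑ x ∈ W.1, ((G.degree x : ℝ) + q x)

/-- The Cheeger constant at infinity: `α_∞ = sup over finite K of α_{V∖K}`. -/
def cheegerInfty (q : V → ℝ) : ℝ :=
  ⨆ K : Finset V, cheeger G q ((↑K : Set V)ᶜ)

lemma sum_deg_eq (W : Finset V) :
    ∑ x ∈ W, G.degree x = edgesTwice G W + bdryCard G W := by
  have h1 : edgesTwice G W = ∑ x ∈ W, ((G.neighborFinset x).filter (fun y => y ∈ W)).card := by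
    unfold edgesTwice
    rw [Finset.card_filter, Finset.sum_product]
    refine Finset.sum_congr rfl fun x hx => ?_
    have : (G.neighborFinset x).filter (fun y => y ∈ W) = W.filter (fun y => G.Adj x y) := by
      ext y; simp [SimpleGraph.mem_neighborFinset, and_comm]
    rw [this, Finset.card_filter]
  rw [h1]
  unfold bdryCard
  rw [← Finset.sum_add_distrib]
  refine Finset.sum_congr rfl fun x hx => ?_
  rw [Finset.card_filter_add_card_filter_not, SimpleGraph.degree]

lemma sparse_deg (q : V → ℝ) (a k : ℝ)
    (hsparse : ∀ W : Finset V, (edgesTwice G W : ℝ) ≤ k * W.card + a * ((bdryCard G W : ℝ) + ∑ x ∈ W, max (q x) 0))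
    (W : Finset V) :
    ∑ x ∈ W, (G.degree x : ℝ) ≤ k * W.card + (a+1) * (bdryCard G W : ℝ) + a * ∑ x ∈ W, max (q x) 0 := by
  have h1 := hsparse W
  have h2 : (∑ x ∈ W, (G.degree x : ℝ)) = (edgesTwice G W : ℝ) + (bdryCard G W : ℝ) := by
    rw [← Nat.cast_sum, sum_deg_eq, Nat.cast_add]
  linarith

lemma coarea (q : V → ℝ) (a k : ℝ) (ha : 0 ≤ a) (hk : 0 ≤ k)
    (hsparse : ∀ W : Finset V, (edgesTwice G W : ℝ) ≤ k * W.card + a * ((bdryCard G W : ℝ) + ∑ x ∈ W, max (q x) 0))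
    (S : Finset V) (n : ℕ) :
    ∀ (h : V → ℝ), (∀ x, 0 ≤ h x) → (∀ x ∉ S, h x = 0) →
      (∀ x, h x ≠ 0 → G.neighborFinset x ⊆ S) →
      ((S.image h).filter (fun t => 0 < t)).card ≤ n →
      ∑ x ∈ S, (G.degree x : ℝ) * h x ≤
        k * ∑ x ∈ S, h x
        + (a + 1) * ((1/2) * ∑ x ∈ S, ∑ y ∈ S, if G.Adj x y then |h x - h y| else 0)
        + a * ∑ x ∈ S, max (q x) 0 * h x := by
  induction n with
  | zero =>
    intro h h0 hS hcl hcard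
    have hzero : ∀ x, h x = 0 := by
      intro x
      by_contra hne
      have hxS : x ∈ S := by by_contra h'; exact hne (hS _ h')
      have : h x ∈ (S.image h).filter (fun t => 0 < t) :=
        Finset.mem_filter.mpr ⟨Finset.mem_image_of_mem h hxS, lt_of_le_of_ne (h0 x) (Ne.symm hne)⟩
      have := Finset.card_pos.mpr ⟨h x, this⟩
      omega
    simp [hzero]
  | succ n ih =>
    intro h h0 hS hcl hcard
    by_cases hz : ∀ x, h x = 0
    · simp [hz]
    · push_neg at hz
      obtain ⟨x₀, hx₀⟩ := hz
      have hx₀S : x₀ ∈ S := by by_contra h'; exact hx₀ (hS _ h')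
      have himg : (S.image h).Nonempty := ⟨h x₀, Finset.mem_image_of_mem h hx₀S⟩
      set m := (S.image h).max' himg with hm
      have hmpos : 0 < m :=
        lt_of_lt_of_le (lt_of_le_of_ne (h0 x₀) (Ne.symm hx₀))
          (Finset.le_max' _ _ (Finset.mem_image_of_mem h hx₀S))
      have hle : ∀ x ∈ S, h x ≤ m := fun x hx => Finset.le_max' _ _ (Finset.mem_image_of_mem h hx)
      set W := S.filter (fun x => h x = m) with hWdef
      set F := (insert (0:ℝ) (S.image h)).filter (fun t => t < m) with hF
      have hFne : F.Nonempty := ⟨0, by simp [hF, hmpos]⟩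
      set m' := F.max' hFne with hm'
      have hm'0 : 0 ≤ m' := Finset.le_max' _ _ (by simp [hF, hmpos])
      have hm'lt : m' < m := (Finset.mem_filter.mp (F.max'_mem hFne)).2
      have hm'max : ∀ x ∈ S, x ∉ W → h x ≤ m' := by
        intro x hxS hxW
        apply Finset.le_max'
        simp only [hF, Finset.mem_filter, Finset.mem_insert]
        exact ⟨Or.inr (Finset.mem_image_of_mem h hxS),
          lt_of_le_of_ne (hle x hxS) (fun heq => hxW (Finset.mem_filter.mpr ⟨hxS, heq⟩))⟩
      set c := m - m' with hc
      have hcpos : 0 < c := sub_pos.mpr hm'lt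
      set h' := fun x => if x ∈ W then m' else h x with hh'
      have hWsub : W ⊆ S := Finset.filter_subset _ _
      have hWval : ∀ x ∈ W, h x = m := fun x hx => (Finset.mem_filter.mp hx).2
      -- properties of h'
      have h0' : ∀ x, 0 ≤ h' x := by
        intro x; simp only [hh']; split
        · exact hm'0
        · exact h0 x
      have hS' : ∀ x ∉ S, h' x = 0 := by
        intro x hx
        simp only [hh']
        rw [if_neg (fun hxW => hx (hWsub hxW))]
        exact hS x hx
      have hcl' : ∀ x, h' x ≠ 0 → G.neighborFinset x ⊆ S := by
        intro x hx
        apply hcl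
        simp only [hh'] at hx
        by_cases hxW : x ∈ W
        · rw [hWval x hxW]; exact ne_of_gt hmpos
        · rwa [if_neg hxW] at hx
      have hcard' : ((S.image h').filter (fun t => 0 < t)).card ≤ n := by
        have hsub : (S.image h').filter (fun t => 0 < t) ⊆
            ((S.image h).filter (fun t => 0 < t)).erase m := by
          intro t ht
          obtain ⟨htimg, htpos⟩ := Finset.mem_filter.mp ht
          obtain ⟨x, hxS, hxt⟩ := Finset.mem_image.mp htimg
          simp only [hh'] at hxt
          by_cases hxW : x ∈ W
          · rw [if_pos hxW] at hxt
            subst hxt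
            have hm'img : m' ∈ S.image h := by
              have := (Finset.mem_filter.mp (F.max'_mem hFne)).1
              rcases Finset.mem_insert.mp this with h1 | h1
              · exact absurd h1 (ne_of_gt htpos)
              · exact h1
            exact Finset.mem_erase.mpr ⟨ne_of_lt hm'lt, Finset.mem_filter.mpr ⟨hm'img, htpos⟩⟩
          · rw [if_neg hxW] at hxt
            subst hxt
            refine Finset.mem_erase.mpr ⟨?_, Finset.mem_filter.mpr ⟨Finset.mem_image_of_mem h hxS, htpos⟩⟩
            exact ne_of_lt (lt_of_le_of_lt (hm'max x hxS hxW) hm'lt)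
        have hmem : m ∈ (S.image h).filter (fun t => 0 < t) :=
          Finset.mem_filter.mpr ⟨(S.image h).max'_mem himg, hmpos⟩
        calc ((S.image h').filter (fun t => 0 < t)).card
            ≤ (((S.image h).filter (fun t => 0 < t)).erase m).card := Finset.card_le_card hsub
          _ = ((S.image h).filter (fun t => 0 < t)).card - 1 := Finset.card_erase_of_mem hmem
          _ ≤ n := by omega
      -- decomposition h = h' + c·1_W
      have hdecomp : ∀ x ∈ S, h x = h' x + (if x ∈ W then c else 0) := by
        intro x hx
        simp only [hh']
        by_cases hxW : x ∈ W
        · rw [if_pos hxW, if_pos hxW, hWval x hxW, hc]; ring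
        · rw [if_neg hxW, if_neg hxW]; ring
      have key : ∀ w : V → ℝ, ∑ x ∈ S, w x * h x = ∑ x ∈ S, w x * h' x + c * ∑ x ∈ W, w x := by
        intro w
        have : ∑ x ∈ S, w x * h x = ∑ x ∈ S, (w x * h' x + w x * (if x ∈ W then c else 0)) := by
          refine Finset.sum_congr rfl fun x hx => ?_
          rw [hdecomp x hx]; ring
        rw [this, Finset.sum_add_distrib]
        congr 1
        have : ∀ x ∈ S, w x * (if x ∈ W then c else 0) = if x ∈ W then w x * c else 0 := by
          intro x _; split <;> ring
        rw [Finset.sum_congr rfl this, ← Finset.sum_filter,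
          Finset.filter_mem_eq_inter, Finset.inter_eq_right.mpr hWsub, ← Finset.sum_mul]
        ring
      -- pointwise abs decomposition
      have habs : ∀ x ∈ S, ∀ y ∈ S, |h x - h y| =
          |h' x - h' y| + (if (x ∈ W ∧ y ∉ W) ∨ (y ∈ W ∧ x ∉ W) then c else 0) := by
        intro x hx y hy
        by_cases hxW : x ∈ W <;> by_cases hyW : y ∈ W
        · simp only [hh', if_pos hxW, if_pos hyW, hWval x hxW, hWval y hyW]
          rw [if_neg (by tauto)]
          simp
        · have h1 : h y ≤ m' := hm'max y hy hyW
          simp only [hh', if_pos hxW, if_neg hyW]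
          rw [hWval x hxW, if_pos (Or.inl ⟨hxW, hyW⟩),
            abs_of_nonneg (by linarith), abs_of_nonneg (by linarith), hc]
          ring
        · have h1 : h x ≤ m' := hm'max x hx hxW
          simp only [hh', if_neg hxW, if_pos hyW]
          rw [hWval y hyW, if_pos (Or.inr ⟨hyW, hxW⟩),
            abs_of_nonpos (by linarith), abs_of_nonpos (by linarith), hc]
          ring
        · simp only [hh', if_neg hxW, if_neg hyW]
          rw [if_neg (by tauto)]
          ring
      have hbdry : ∀ x ∈ W, (((G.neighborFinset x).filter (fun y => y ∉ W)).card : ℝ)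
          = ∑ y ∈ S, (if G.Adj x y ∧ y ∉ W then (1:ℝ) else 0) := by
        intro x hx
        have hnbr : G.neighborFinset x ⊆ S :=
          hcl x (by rw [hWval x hx]; exact ne_of_gt hmpos)
        have heq : (G.neighborFinset x).filter (fun y => y ∉ W)
            = S.filter (fun y => G.Adj x y ∧ y ∉ W) := by
          ext y
          simp only [Finset.mem_filter, SimpleGraph.mem_neighborFinset]
          constructor
          · rintro ⟨h1, h2⟩
            exact ⟨hnbr ((SimpleGraph.mem_neighborFinset G x y).mpr h1), h1, h2⟩
          · rintro ⟨_, h1, h2⟩; exact ⟨h1, h2⟩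
        rw [heq, Finset.card_filter]
        push_cast
        rfl
      have hBone : ∑ x ∈ S, ∑ y ∈ S,
            (if G.Adj x y then (if x ∈ W ∧ y ∉ W then c else 0) else 0)
          = c * (bdryCard G W : ℝ) := by
        have hstep : ∀ x ∈ S, ∑ y ∈ S, (if G.Adj x y then (if x ∈ W ∧ y ∉ W then c else 0) else 0)
            = if x ∈ W then c * ∑ y ∈ S, (if G.Adj x y ∧ y ∉ W then (1:ℝ) else 0) else 0 := by
          intro x hx
          by_cases hxW : x ∈ W
          · rw [if_pos hxW, Finset.mul_sum]
            refine Finset.sum_congr rfl fun y hy => ?_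
            by_cases hadj : G.Adj x y <;> by_cases hyW : y ∈ W <;>
              simp [hadj, hxW, hyW]
          · rw [if_neg hxW]
            refine Finset.sum_eq_zero fun y hy => ?_
            by_cases hadj : G.Adj x y <;> simp [hadj, hxW]
        rw [Finset.sum_congr rfl hstep, ← Finset.sum_filter,
          Finset.filter_mem_eq_inter, Finset.inter_eq_right.mpr hWsub]
        unfold bdryCard
        rw [Nat.cast_sum, Finset.mul_sum]
        refine Finset.sum_congr rfl fun x hx => ?_
        rw [hbdry x hx]
      have hBtwo : ∑ x ∈ S, ∑ y ∈ S,
            (if G.Adj x y then (if y ∈ W ∧ x ∉ W then c else 0) else 0)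
          = c * (bdryCard G W : ℝ) := by
        rw [Finset.sum_comm, ← hBone]
        refine Finset.sum_congr rfl fun x hx => Finset.sum_congr rfl fun y hy => ?_
        by_cases hadj : G.Adj x y
        · rw [if_pos hadj.symm, if_pos hadj]
        · rw [if_neg (fun hh => hadj hh.symm), if_neg hadj]
      have hBsum : ∑ x ∈ S, ∑ y ∈ S, (if G.Adj x y then |h x - h y| else 0)
          = ∑ x ∈ S, ∑ y ∈ S, (if G.Adj x y then |h' x - h' y| else 0)
            + 2 * c * (bdryCard G W : ℝ) := by
        have hsplit : ∀ x ∈ S, ∀ y ∈ S,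
            (if G.Adj x y then |h x - h y| else 0)
            = (if G.Adj x y then |h' x - h' y| else 0)
              + (if G.Adj x y then (if x ∈ W ∧ y ∉ W then c else 0) else 0)
              + (if G.Adj x y then (if y ∈ W ∧ x ∉ W then c else 0) else 0) := by
          intro x hx y hy
          by_cases hadj : G.Adj x y
          · simp only [if_pos hadj, habs x hx y hy]
            by_cases hxW : x ∈ W <;> by_cases hyW : y ∈ W <;>
              simp [hxW, hyW] <;> ring
          · simp [hadj]
        calc ∑ x ∈ S, ∑ y ∈ S, (if G.Adj x y then |h x - h y| else 0)
            = ∑ x ∈ S, ∑ y ∈ S, ((if G.Adj x y then |h' x - h' y| else 0)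
              + (if G.Adj x y then (if x ∈ W ∧ y ∉ W then c else 0) else 0)
              + (if G.Adj x y then (if y ∈ W ∧ x ∉ W then c else 0) else 0)) := by
              refine Finset.sum_congr rfl fun x hx => Finset.sum_congr rfl fun y hy => ?_
              exact hsplit x hx y hy
          _ = ∑ x ∈ S, ∑ y ∈ S, (if G.Adj x y then |h' x - h' y| else 0)
              + ∑ x ∈ S, ∑ y ∈ S, (if G.Adj x y then (if x ∈ W ∧ y ∉ W then c else 0) else 0)
              + ∑ x ∈ S, ∑ y ∈ S, (if G.Adj x y then (if y ∈ W ∧ x ∉ W then c else 0) else 0) := by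
              rw [← Finset.sum_add_distrib, ← Finset.sum_add_distrib]
              refine Finset.sum_congr rfl fun x hx => ?_
              rw [← Finset.sum_add_distrib, ← Finset.sum_add_distrib]
          _ = _ := by rw [hBone, hBtwo]; ring
      -- assemble
      have hIH := ih h' h0' hS' hcl' hcard'
      have hsp := sparse_deg G q a k hsparse W
      have hspc := mul_le_mul_of_nonneg_left hsp hcpos.le
      have hdeg := key (fun x => (G.degree x : ℝ))
      have hqkey := key (fun x => max (q x) 0)
      have hone : ∑ x ∈ S, h x = ∑ x ∈ S, h' x + c * W.card := by
        have := key (fun _ => (1:ℝ))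
        simpa using this
      rw [hdeg, hqkey, hone, hBsum]
      nlinarith [hspc, hIH]

lemma sum_adj_weight (S : Finset V) (w : V → ℝ)
    (hcl : ∀ x, w x ≠ 0 → G.neighborFinset x ⊆ S) :
    ∑ x ∈ S, ∑ y ∈ S, (if G.Adj x y then w x else 0) = ∑ x ∈ S, (G.degree x : ℝ) * w x := by
  refine Finset.sum_congr rfl fun x hx => ?_
  by_cases hw : w x = 0
  · simp [hw]
  · have hnbr := hcl x hw
    have heq : S.filter (fun y => G.Adj x y) = G.neighborFinset x := by
      ext y
      simp only [Finset.mem_filter, SimpleGraph.mem_neighborFinset]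
      exact ⟨fun h => h.2, fun h => ⟨hnbr ((SimpleGraph.mem_neighborFinset G x y).mpr h), h⟩⟩
    rw [← Finset.sum_filter, heq, Finset.sum_const, SimpleGraph.degree, nsmul_eq_mul]

lemma sum_adj_weight' (S : Finset V) (w : V → ℝ)
    (hcl : ∀ x, w x ≠ 0 → G.neighborFinset x ⊆ S) :
    ∑ x ∈ S, ∑ y ∈ S, (if G.Adj x y then w y else 0) = ∑ x ∈ S, (G.degree x : ℝ) * w x := by
  rw [Finset.sum_comm, ← sum_adj_weight G S w hcl]
  refine Finset.sum_congr rfl fun x hx => Finset.sum_congr rfl fun y hy => ?_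
  by_cases hadj : G.Adj x y
  · rw [if_pos hadj.symm, if_pos hadj]
  · rw [if_neg (fun hh => hadj hh.symm), if_neg hadj]


lemma qPot_eq_sum (w : V → ℝ) (f : V → ℂ) (S : Finset V) (h1 : ∀ x, f x ≠ 0 → x ∈ S) :
    qPot w f = ∑ x ∈ S, w x * ‖f x‖ ^ 2 := by
  refine tsum_eq_sum fun x hx => ?_
  have : f x = 0 := by by_contra h; exact hx (h1 x h)
  simp [this]

lemma qNormSq_eq_sum (f : V → ℂ) (S : Finset V) (h1 : ∀ x, f x ≠ 0 → x ∈ S) :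
    qNormSq f = ∑ x ∈ S, ‖f x‖ ^ 2 := by
  refine tsum_eq_sum fun x hx => ?_
  have : f x = 0 := by by_contra h; exact hx (h1 x h)
  simp [this]

lemma qDeg_eq_sum (f : V → ℂ) (S : Finset V) (h1 : ∀ x, f x ≠ 0 → x ∈ S) :
    qDeg G f = ∑ x ∈ S, (G.degree x : ℝ) * ‖f x‖ ^ 2 := by
  refine tsum_eq_sum fun x hx => ?_
  have : f x = 0 := by by_contra h; exact hx (h1 x h)
  simp [this]

lemma qMag_eq_sum (θ : V → V → ℝ) (f : V → ℂ) (S : Finset V)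
    (h1 : ∀ x, f x ≠ 0 → x ∈ S) (h2 : ∀ x, f x ≠ 0 → G.neighborFinset x ⊆ S) :
    qMag G θ f = (1/2) * ∑ x ∈ S, ∑ y ∈ S,
      (if G.Adj x y then ‖f x - Complex.exp (Complex.I * (θ x y)) * f y‖ ^ 2 else 0) := by
  unfold qMag
  congr 1
  have hterm : ∀ x, ∀ y ∉ S,
      (if G.Adj x y then ‖f x - Complex.exp (Complex.I * (θ x y)) * f y‖ ^ 2 else 0) = 0 := by
    intro x y hy
    have hfy : f y = 0 := by by_contra h; exact hy (h1 y h)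
    by_cases hadj : G.Adj x y
    · rw [if_pos hadj]
      have hfx : f x = 0 := by
        by_contra hfx
        exact hy (h2 x hfx ((SimpleGraph.mem_neighborFinset G x y).mpr hadj))
      rw [hfx, hfy]; simp
    · rw [if_neg hadj]
  rw [tsum_congr (fun x => tsum_eq_sum (hterm x))]
  refine tsum_eq_sum fun x hx => ?_
  have hfx : f x = 0 := by by_contra h; exact hx (h1 x h)
  refine Finset.sum_eq_zero fun y hy => ?_
  by_cases hadj : G.Adj x y
  · rw [if_pos hadj]
    have hfy : f y = 0 := by
      by_contra hfy
      exact hx ((h2 y hfy) ((SimpleGraph.mem_neighborFinset G y x).mpr hadj.symm))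
    rw [hfx, hfy]; simp
  · rw [if_neg hadj]


set_option maxHeartbeats 2000000 in
/-- for `q ∈ K_{0⁺}^θ` and `(G,q)` `(a,k)`-sparse, there are `ã ∈ (0,1)`
and `k̃ ≥ 0` with
`(1-ã)(Q_deg(f)+Q_q(f)) - k̃‖f‖² ≤ Q_θ(f)+Q_q(f) ≤ (1+ã)(Q_deg(f)+Q_q(f)) + k̃‖f‖²`
for all finitely supported `f`. -/
theorem stmt12 [Countable V] (θ : V → V → ℝ) (hθ : ∀ x y, θ x y = -θ y x) (q : V → ℝ)
    (hq : ∀ α : ℝ, 0 < α → α < 1 → KClassTheta G θ q α)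
    (a k : ℝ) (ha : 0 ≤ a) (hk : 0 ≤ k) (hsparse : IsSparse G q a k) :
    ∃ ta tk : ℝ, 0 < ta ∧ ta < 1 ∧ 0 ≤ tk ∧
      ∀ f : V → ℂ, (Function.support f).Finite →
        (1 - ta) * (qDeg G f + qPot q f) - tk * qNormSq f ≤ qMag G θ f + qPot q f ∧
        qMag G θ f + qPot q f ≤ (1 + ta) * (qDeg G f + qPot q f) + tk * qNormSq f := by
  classical
  have hβ1 : (1:ℝ) ≤ (a+1)^2 := by nlinarith
  have hβpos : (0:ℝ) < (a+1)^2 := by nlinarith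
  set β : ℝ := (a+1)^2 with hβdef
  set γ : ℝ := 1/(4*β) with hγdef
  have hγpos : 0 < γ := by positivity
  have hγβ : γ * β = 1/4 := by
    rw [hγdef]; field_simp
  have hγ4 : γ ≤ 1/4 := by
    rw [hγdef, div_le_div_iff₀ (by positivity) (by norm_num)]
    nlinarith
  have hαpos : 0 < γ/4 := by linarith
  have hα1 : γ/4 < 1 := by linarith
  obtain ⟨C, hC0, hC⟩ := hq (γ/4) hαpos hα1
  refine ⟨1 - γ/2, C + k, by linarith, by linarith, by linarith, ?_⟩
  intro f hf
  -- the big enough finset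
  obtain ⟨S, h1, h2⟩ : ∃ S : Finset V, (∀ x, f x ≠ 0 → x ∈ S) ∧
      (∀ x, f x ≠ 0 → G.neighborFinset x ⊆ S) := by
    refine ⟨hf.toFinset ∪ hf.toFinset.biUnion (fun z => G.neighborFinset z), ?_, ?_⟩
    · exact fun x hx => Finset.mem_union_left _ (hf.mem_toFinset.mpr hx)
    · intro x hx y hy
      exact Finset.mem_union_right _ (Finset.mem_biUnion.mpr ⟨x, hf.mem_toFinset.mpr hx, hy⟩)
  obtain ⟨D, hDdef⟩ : ∃ t : ℝ, t = ∑ x ∈ S, (G.degree x : ℝ) * ‖f x‖ ^ 2 := ⟨_, rfl⟩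
  obtain ⟨Pp, hPdef⟩ : ∃ t : ℝ, t = ∑ x ∈ S, max (q x) 0 * ‖f x‖ ^ 2 := ⟨_, rfl⟩
  obtain ⟨Nn, hNdef⟩ : ∃ t : ℝ, t = ∑ x ∈ S, max (-q x) 0 * ‖f x‖ ^ 2 := ⟨_, rfl⟩
  obtain ⟨nrm, hnrmdef⟩ : ∃ t : ℝ, t = ∑ x ∈ S, ‖f x‖ ^ 2 := ⟨_, rfl⟩
  obtain ⟨T, hTdef⟩ : ∃ t : ℝ, t = (1/2) * ∑ x ∈ S, ∑ y ∈ S,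
    (if G.Adj x y then ‖f x - Complex.exp (Complex.I * (θ x y)) * f y‖ ^ 2 else 0) := ⟨_, rfl⟩
  obtain ⟨L, hLdef⟩ : ∃ t : ℝ, t = (1/2) * ∑ x ∈ S, ∑ y ∈ S,
    (if G.Adj x y then (‖f x‖ - ‖f y‖) ^ 2 else 0) := ⟨_, rfl⟩
  -- conversions
  have hMag : qMag G θ f = T := by rw [hTdef]; exact qMag_eq_sum G θ f S h1 h2
  have hDeg : qDeg G f = D := by rw [hDdef]; exact qDeg_eq_sum G f S h1
  have hNS : qNormSq f = nrm := by rw [hnrmdef]; exact qNormSq_eq_sum f S h1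
  have hPq : qPot q f = Pp - Nn := by
    rw [qPot_eq_sum q f S h1, hPdef, hNdef, ← Finset.sum_sub_distrib]
    refine Finset.sum_congr rfl fun x hx => ?_
    rcases le_total (q x) 0 with h | h
    · rw [max_eq_right h, max_eq_left (by linarith)]; ring
    · rw [max_eq_left h, max_eq_right (by linarith)]; ring
  have hF4 : Nn ≤ (γ/4) * (T + Pp) + C * nrm := by
    have h5 := hC f hf
    rw [qMag_eq_sum G θ f S h1 h2, qNormSq_eq_sum f S h1,
      qPot_eq_sum (fun x => max (-q x) 0) f S h1,
      qPot_eq_sum (fun x => max (q x) 0) f S h1, ← hTdef, ← hnrmdef, ← hNdef, ← hPdef] at h5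
    exact h5
  -- nonnegativity
  have hT0 : 0 ≤ T := by
    rw [hTdef]
    have : 0 ≤ ∑ x ∈ S, ∑ y ∈ S,
        (if G.Adj x y then ‖f x - Complex.exp (Complex.I * (θ x y)) * f y‖ ^ 2 else 0) :=
      Finset.sum_nonneg fun x _ => Finset.sum_nonneg fun y _ => by positivity
    linarith
  have hL0 : 0 ≤ L := by
    rw [hLdef]
    have : 0 ≤ ∑ x ∈ S, ∑ y ∈ S, (if G.Adj x y then (‖f x‖ - ‖f y‖) ^ 2 else 0) :=
      Finset.sum_nonneg fun x _ => Finset.sum_nonneg fun y _ => by positivity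
    linarith
  have hD0 : 0 ≤ D := hDdef ▸ Finset.sum_nonneg fun x _ => by positivity
  have hP0 : 0 ≤ Pp := hPdef ▸ Finset.sum_nonneg fun x _ => by positivity
  have hN0 : 0 ≤ Nn := hNdef ▸ Finset.sum_nonneg fun x _ => by positivity
  have hn0 : 0 ≤ nrm := hnrmdef ▸ Finset.sum_nonneg fun x _ => by positivity
  -- norm of the phase
  have hexp : ∀ s t : V, ‖Complex.exp (Complex.I * (θ s t : ℝ) : ℂ)‖ = 1 := by
    intro s t
    rw [Complex.norm_exp]
    simp
  -- F1 : Kato, L ≤ T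
  have hF1 : L ≤ T := by
    have hs : ∑ x ∈ S, ∑ y ∈ S, (if G.Adj x y then (‖f x‖ - ‖f y‖) ^ 2 else 0)
        ≤ ∑ x ∈ S, ∑ y ∈ S,
          (if G.Adj x y then ‖f x - Complex.exp (Complex.I * (θ x y)) * f y‖ ^ 2 else 0) := by
      refine Finset.sum_le_sum fun x _ => Finset.sum_le_sum fun y _ => ?_
      by_cases hadj : G.Adj x y
      · rw [if_pos hadj, if_pos hadj]
        have hab : |‖f x‖ - ‖Complex.exp (Complex.I * (θ x y : ℝ) : ℂ) * f y‖|
            ≤ ‖f x - Complex.exp (Complex.I * (θ x y)) * f y‖ := abs_norm_sub_norm_le _ _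
        rw [norm_mul, hexp x y, one_mul] at hab
        calc (‖f x‖ - ‖f y‖) ^ 2 = |‖f x‖ - ‖f y‖| ^ 2 := (sq_abs _).symm
          _ ≤ _ := pow_le_pow_left₀ (abs_nonneg _) hab 2
      · rw [if_neg hadj, if_neg hadj]
    rw [hLdef, hTdef]
    linarith only [hs]
  -- closure for the weight
  have hwcl : ∀ x, ‖f x‖ ^ 2 ≠ 0 → G.neighborFinset x ⊆ S := by
    intro x hx
    apply h2
    intro h0
    rw [h0] at hx
    simp at hx
  have e1 : ∑ x ∈ S, ∑ y ∈ S, (if G.Adj x y then ‖f x‖ ^ 2 else 0)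
      = ∑ x ∈ S, (G.degree x : ℝ) * ‖f x‖ ^ 2 := sum_adj_weight G S (fun x => ‖f x‖ ^ 2) hwcl
  have e2 : ∑ x ∈ S, ∑ y ∈ S, (if G.Adj x y then ‖f y‖ ^ 2 else 0)
      = ∑ x ∈ S, (G.degree x : ℝ) * ‖f x‖ ^ 2 := sum_adj_weight' G S (fun x => ‖f x‖ ^ 2) hwcl
  have hEq2 : ∑ x ∈ S, ∑ y ∈ S, (if G.Adj x y then ‖f x‖ ^ 2 + ‖f y‖ ^ 2 else 0) = 2 * D := by
    calc ∑ x ∈ S, ∑ y ∈ S, (if G.Adj x y then ‖f x‖ ^ 2 + ‖f y‖ ^ 2 else 0)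
        = ∑ x ∈ S, ∑ y ∈ S, ((if G.Adj x y then ‖f x‖ ^ 2 else 0)
            + (if G.Adj x y then ‖f y‖ ^ 2 else 0)) := by
          refine Finset.sum_congr rfl fun x _ => Finset.sum_congr rfl fun y _ => ?_
          split <;> simp
      _ = 2 * D := by
          simp only [Finset.sum_add_distrib]
          rw [e1, e2, ← hDdef]
          ring
  have hXL : ∑ x ∈ S, ∑ y ∈ S, (if G.Adj x y then (‖f x‖ - ‖f y‖) ^ 2 else 0) = 2 * L := by
    rw [hLdef]; ring
  -- F2 : T ≤ 2 D - L
  have hF2 : T ≤ 2 * D - L := by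
    have hs : ∑ x ∈ S, ∑ y ∈ S,
          (if G.Adj x y then ‖f x - Complex.exp (Complex.I * (θ x y)) * f y‖ ^ 2 else 0)
        ≤ ∑ x ∈ S, ∑ y ∈ S, (2 * (if G.Adj x y then ‖f x‖ ^ 2 + ‖f y‖ ^ 2 else 0)
            - (if G.Adj x y then (‖f x‖ - ‖f y‖) ^ 2 else 0)) := by
      refine Finset.sum_le_sum fun x _ => Finset.sum_le_sum fun y _ => ?_
      by_cases hadj : G.Adj x y
      · simp only [if_pos hadj]
        have hns : ‖f x - Complex.exp (Complex.I * (θ x y)) * f y‖ ≤ ‖f x‖ + ‖f y‖ := by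
          calc ‖f x - Complex.exp (Complex.I * (θ x y)) * f y‖
              ≤ ‖f x‖ + ‖Complex.exp (Complex.I * (θ x y : ℝ) : ℂ) * f y‖ := norm_sub_le _ _
            _ = ‖f x‖ + ‖f y‖ := by rw [norm_mul, hexp x y, one_mul]
        nlinarith only [hns, norm_nonneg (f x - Complex.exp (Complex.I * (θ x y)) * f y),
          norm_nonneg (f x), norm_nonneg (f y)]
      · simp [hadj]
    simp only [Finset.sum_sub_distrib, ← Finset.mul_sum] at hs
    rw [hEq2, hXL] at hs
    rw [hTdef]
    linarith only [hs, hDdef, hLdef]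
  -- coarea / sparseness estimate
  have hco := coarea G q a k ha hk hsparse S
    (((S.image (fun x => ‖f x‖ ^ 2)).filter (fun t => 0 < t)).card)
    (fun x => ‖f x‖ ^ 2) (fun x => by positivity)
    (fun x hx => by
      have : f x = 0 := by by_contra h; exact hx (h1 x h)
      simp [this])
    hwcl le_rfl
  beta_reduce at hco
  have hBB : (a+1) * (∑ x ∈ S, ∑ y ∈ S, (if G.Adj x y then |‖f x‖ ^ 2 - ‖f y‖ ^ 2| else 0))
      ≤ (a+1)^2 * (2 * L) + D := by
    have hs : ∑ x ∈ S, ∑ y ∈ S, ((a+1) * (if G.Adj x y then |‖f x‖ ^ 2 - ‖f y‖ ^ 2| else 0))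
        ≤ ∑ x ∈ S, ∑ y ∈ S, ((a+1)^2 * (if G.Adj x y then (‖f x‖ - ‖f y‖) ^ 2 else 0)
            + (1/2) * (if G.Adj x y then ‖f x‖ ^ 2 + ‖f y‖ ^ 2 else 0)) := by
      refine Finset.sum_le_sum fun x _ => Finset.sum_le_sum fun y _ => ?_
      by_cases hadj : G.Adj x y
      · simp only [if_pos hadj]
        rcases abs_cases (‖f x‖ ^ 2 - ‖f y‖ ^ 2) with ⟨heq, _⟩ | ⟨heq, _⟩ <;> rw [heq]
        · nlinarith only [sq_nonneg (2*(a+1)*(‖f x‖ - ‖f y‖) - (‖f x‖ + ‖f y‖)),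
            sq_nonneg (‖f x‖ - ‖f y‖)]
        · nlinarith only [sq_nonneg (2*(a+1)*(‖f x‖ - ‖f y‖) + (‖f x‖ + ‖f y‖)),
            sq_nonneg (‖f x‖ - ‖f y‖)]
      · simp [hadj]
    simp only [Finset.sum_add_distrib, ← Finset.mul_sum] at hs
    rw [hEq2, hXL] at hs
    linarith only [hs]
  have hF3 : D ≤ 2*k*nrm + 2*β*L + 2*a*Pp := by
    rw [hβdef]
    have hknrm : k * nrm = k * ∑ x ∈ S, ‖f x‖ ^ 2 := by rw [hnrmdef]
    have haPp : a * Pp = a * ∑ x ∈ S, (q x ⊔ 0) * ‖f x‖ ^ 2 := by rw [hPdef]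
    linarith only [hco, hBB, hDdef, hknrm, haPp]
  -- the gamma-scaled estimate
  have haβ : a ≤ β := by rw [hβdef]; nlinarith only [ha]
  have hγa : γ * a ≤ 1/4 := by
    calc γ * a ≤ γ * β := mul_le_mul_of_nonneg_left haβ hγpos.le
      _ = 1/4 := hγβ
  have hγD : γ * D ≤ (1/2)*k*nrm + (1/2)*L + (1/2)*Pp := by
    have hm := mul_le_mul_of_nonneg_left hF3 hγpos.le
    have hγβL : (γ * β) * L = (1/4) * L := by rw [hγβ]
    have t1 : γ * k ≤ (1/4) * k := mul_le_mul_of_nonneg_right hγ4 hk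
    have t2 : (γ * k) * nrm ≤ ((1/4) * k) * nrm := mul_le_mul_of_nonneg_right t1 hn0
    have t3 : (γ * a) * Pp ≤ (1/4) * Pp := mul_le_mul_of_nonneg_right hγa hP0
    nlinarith only [hm, hγβL, t2, t3, mul_nonneg hk hn0]
  -- final assembly
  rw [hMag, hDeg, hNS, hPq]
  constructor
  · nlinarith only [hF1, hF4, hγD, hγ4, hγpos.le, hT0, hP0, hN0, hn0, hL0, hC0, hk,
      mul_nonneg hγpos.le hN0, mul_le_mul_of_nonneg_right hγ4 hT0,
      mul_le_mul_of_nonneg_right hγ4 hP0, mul_nonneg hk hn0, mul_nonneg hC0 hn0]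
  · nlinarith only [hF2, hF4, hγD, hγ4, hγpos.le, hT0, hP0, hN0, hn0, hL0, hC0, hk,
      mul_nonneg hγpos.le hN0, mul_nonneg hγpos.le hL0,
      mul_le_mul_of_nonneg_right hγ4 hP0, mul_nonneg hk hn0, mul_nonneg hC0 hn0,
      mul_nonneg hγpos.le (by linarith only [hF2] : (0:ℝ) ≤ 2*D - L - T)]

end
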